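/- (Renewal/reversibility bound) Let J be an irreducible reversible discrete-time Markov chain on a finite state space with reversible measure G. For any states σ, η and any set W containing η with σ ∉ W: P_σ(τ_η < τ_{W∖η}) ≤ P_σ(τ_η < τ_{(W∖η)∪σ}) / P_σ(τ_W < τ_σ), and moreover P_σ(τ_η < τ_{(W∖η)∪σ}) = (G(η)/G(σ)) · P_η(τ_σ < τ_W). -/
import Mathlib


open scoped BigOperators

/-- Transitions of `P` killed upon landing in `A`. -/
noncomputable def taboo {S : Type*} [Fintype S] [DecidableEq S]
    (P : Matrix S S ℝ) (A : Finset S) : Matrix S S ℝ :=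
  fun x y => if y ∈ A then 0 else P x y

/-- `hitProb P A B x = P_x(τ_A < τ_B)`, hitting times after time 0. -/
noncomputable def hitProb {S : Type*} [Fintype S] [DecidableEq S]
    (P : Matrix S S ℝ) (A B : Finset S) (x : S) : ℝ :=
  ∑' k : ℕ, ∑ a ∈ A, ((taboo P (A ∪ B)) ^ k * P) x a

section Aux
variable {S : Type*} [Fintype S] [DecidableEq S]
variable (P : Matrix S S ℝ) (C : Finset S)

lemma taboo_apply (x y : S) : taboo P C x y = if y ∈ C then 0 else P x y := rfl

lemma taboo_nonneg (hP : ∀ x y, 0 ≤ P x y) (x y : S) : 0 ≤ taboo P C x y := by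
  rw [taboo_apply]; split
  · exact le_rfl
  · exact hP x y

lemma pow_taboo_nonneg (hP : ∀ x y, 0 ≤ P x y) (k : ℕ) (x y : S) :
    0 ≤ ((taboo P C) ^ k) x y := by
  induction k generalizing x y with
  | zero => simp only [pow_zero, Matrix.one_apply]; split <;> norm_num
  | succ k ih =>
      rw [pow_succ, Matrix.mul_apply]
      exact Finset.sum_nonneg fun z _ => mul_nonneg (ih x z) (taboo_nonneg P C hP z y)

lemma qkp_nonneg (hP : ∀ x y, 0 ≤ P x y) (k : ℕ) (x y : S) :
    0 ≤ ((taboo P C) ^ k * P) x y := by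
  rw [Matrix.mul_apply]
  exact Finset.sum_nonneg fun z _ => mul_nonneg (pow_taboo_nonneg P C hP k x z) (hP z y)

lemma rowsum_qkp (hProw : ∀ x, ∑ y, P x y = 1) (k : ℕ) (x : S) :
    ∑ y, ((taboo P C) ^ k * P) x y = ∑ y, ((taboo P C) ^ k) x y := by
  simp only [Matrix.mul_apply]
  rw [Finset.sum_comm]
  simp_rw [← Finset.mul_sum, hProw, mul_one]

lemma sum_taboo_row (z : S) : ∑ a ∈ C, P z a + ∑ y, taboo P C z y = ∑ y, P z y := by
  have h1 : ∑ a ∈ C, P z a = ∑ y, if y ∈ C then P z y else 0 := by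
    rw [Finset.sum_ite_mem, Finset.univ_inter]
  rw [h1]
  simp only [taboo_apply]
  rw [← Finset.sum_add_distrib]
  refine Finset.sum_congr rfl fun y _ => ?_
  split <;> ring

lemma sumC_add (hProw : ∀ x, ∑ y, P x y = 1) (k : ℕ) (x : S) :
    ∑ a ∈ C, ((taboo P C) ^ k * P) x a + ∑ y, ((taboo P C) ^ (k + 1)) x y
      = ∑ y, ((taboo P C) ^ k) x y := by
  have h2 : ∑ y, ((taboo P C) ^ (k + 1)) x y
      = ∑ z, ((taboo P C) ^ k) x z * ∑ y, taboo P C z y := by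
    simp only [pow_succ, Matrix.mul_apply]
    rw [Finset.sum_comm]
    simp_rw [← Finset.mul_sum]
  have h3 : ∑ a ∈ C, ((taboo P C) ^ k * P) x a
      = ∑ z, ((taboo P C) ^ k) x z * ∑ a ∈ C, P z a := by
    simp only [Matrix.mul_apply]
    rw [Finset.sum_comm]
    simp_rw [← Finset.mul_sum]
  rw [h2, h3, ← Finset.sum_add_distrib, ← rowsum_qkp P C hProw k x]
  simp only [Matrix.mul_apply]
  rw [Finset.sum_comm]
  simp_rw [← Finset.mul_sum]
  refine Finset.sum_congr rfl fun z _ => ?_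
  rw [← mul_add, sum_taboo_row]

lemma partial_sumC_le_one (hP : ∀ x y, 0 ≤ P x y) (hProw : ∀ x, ∑ y, P x y = 1)
    (K : ℕ) (x : S) :
    ∑ k ∈ Finset.range K, ∑ a ∈ C, ((taboo P C) ^ k * P) x a ≤ 1 := by
  have hterm : ∀ k, ∑ a ∈ C, ((taboo P C) ^ k * P) x a
      = (∑ y, ((taboo P C) ^ k) x y) - ∑ y, ((taboo P C) ^ (k + 1)) x y := by
    intro k
    have := sumC_add P C hProw k x
    linarith
  calc ∑ k ∈ Finset.range K, ∑ a ∈ C, ((taboo P C) ^ k * P) x a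
      = ∑ k ∈ Finset.range K,
          ((∑ y, ((taboo P C) ^ k) x y) - ∑ y, ((taboo P C) ^ (k + 1)) x y) :=
        Finset.sum_congr rfl fun k _ => hterm k
    _ = (∑ y, ((taboo P C) ^ 0) x y) - ∑ y, ((taboo P C) ^ K) x y :=
        Finset.sum_range_sub' (fun k => ∑ y, ((taboo P C) ^ k) x y) K
    _ ≤ ∑ y, ((taboo P C) ^ 0) x y := by
        have : (0:ℝ) ≤ ∑ y, ((taboo P C) ^ K) x y :=
          Finset.sum_nonneg fun y _ => pow_taboo_nonneg P C hP K x y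
        linarith
    _ = 1 := by simp [Matrix.one_apply]

lemma summable_sumC (hP : ∀ x y, 0 ≤ P x y) (hProw : ∀ x, ∑ y, P x y = 1) (x : S) :
    Summable (fun k => ∑ a ∈ C, ((taboo P C) ^ k * P) x a) :=
  summable_of_sum_range_le
    (fun k => Finset.sum_nonneg fun a _ => qkp_nonneg P C hP k x a)
    (fun K => partial_sumC_le_one P C hP hProw K x)

lemma tsum_sumC_le_one (hP : ∀ x y, 0 ≤ P x y) (hProw : ∀ x, ∑ y, P x y = 1) (x : S) :
    ∑' k, ∑ a ∈ C, ((taboo P C) ^ k * P) x a ≤ 1 :=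
  Real.tsum_le_of_sum_range_le
    (fun k => Finset.sum_nonneg fun a _ => qkp_nonneg P C hP k x a)
    (fun K => partial_sumC_le_one P C hP hProw K x)

lemma summable_sumA {A : Finset S} (hAC : A ⊆ C)
    (hP : ∀ x y, 0 ≤ P x y) (hProw : ∀ x, ∑ y, P x y = 1) (x : S) :
    Summable (fun k => ∑ a ∈ A, ((taboo P C) ^ k * P) x a) := by
  refine Summable.of_nonneg_of_le
    (fun k => Finset.sum_nonneg fun a _ => qkp_nonneg P C hP k x a)
    (fun k => Finset.sum_le_sum_of_subset_of_nonneg hAC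
      (fun a _ _ => qkp_nonneg P C hP k x a))
    (summable_sumC P C hP hProw x)


lemma rev_qkp (G : S → ℝ) (hrev : ∀ x y, G x * P x y = G y * P y x)
    (k : ℕ) (x y : S) :
    G x * ((taboo P C) ^ k * P) x y = G y * ((taboo P C) ^ k * P) y x := by
  induction k generalizing x y with
  | zero => simpa using hrev x y
  | succ k ih =>
      have hQ' : ((taboo P C) ^ k * P) *
          (Matrix.of fun z w => if z ∈ C then (0:ℝ) else P z w)
          = (taboo P C) ^ (k + 1) * P := by
        have hPQ : P * (Matrix.of fun z w => if z ∈ C then (0:ℝ) else P z w)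
            = taboo P C * P := by
          ext u v
          simp only [Matrix.mul_apply, Matrix.of_apply, taboo_apply]
          refine Finset.sum_congr rfl fun z _ => ?_
          split <;> ring
        calc ((taboo P C) ^ k * P) *
            (Matrix.of fun z w => if z ∈ C then (0:ℝ) else P z w)
            = (taboo P C) ^ k * (taboo P C * P) := by rw [mul_assoc, hPQ]
          _ = (taboo P C) ^ (k + 1) * P := by rw [← mul_assoc, ← pow_succ]
      have hL : (taboo P C) ^ (k + 1) * P = taboo P C * ((taboo P C) ^ k * P) := by
        rw [← mul_assoc, ← pow_succ']
      rw [hL]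
      conv_rhs => rw [← hL, ← hQ']
      set M := (taboo P C) ^ k * P with hM
      simp only [Matrix.mul_apply, Matrix.of_apply, Finset.mul_sum]
      refine Finset.sum_congr rfl fun z _ => ?_
      by_cases hz : z ∈ C
      · simp [taboo_apply, hz]
      · simp only [taboo_apply, if_neg hz]
        calc G x * (P x z * M z y)
            = (G x * P x z) * M z y := by ring
          _ = (G z * P z x) * M z y := by rw [hrev]
          _ = (G z * M z y) * P z x := by ring
          _ = (G y * M y z) * P z x := by rw [ih]
          _ = G y * (M y z * P z x) := by ring

end Aux

noncomputable def emat {S : Type*} [Fintype S] [DecidableEq S]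
    (P : Matrix S S ℝ) (σ : S) : Matrix S S ℝ :=
  Matrix.of fun x y => if y = σ then P x σ else 0

section Renewal
variable {S : Type*} [Fintype S] [DecidableEq S]
variable (P : Matrix S S ℝ) (W : Finset S) (σ : S)

lemma taboo_split (hσ : σ ∉ W) :
    taboo P W = taboo P (W ∪ {σ}) + emat P σ := by
  ext x y
  simp only [Matrix.add_apply, taboo_apply, emat, Matrix.of_apply, Finset.mem_union,
    Finset.mem_singleton]
  by_cases hy : y = σ
  · subst hy; simp [hσ]
  · simp [hy]

lemma pow_taboo_expand (hσ : σ ∉ W) (k : ℕ) :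
    (taboo P W) ^ k = (taboo P (W ∪ {σ})) ^ k
      + ∑ j ∈ Finset.range k,
          (taboo P (W ∪ {σ})) ^ j * emat P σ * (taboo P W) ^ (k - 1 - j) := by
  induction k with
  | zero => simp
  | succ k ih =>
      have h1 : (taboo P W) ^ (k + 1)
          = (taboo P (W ∪ {σ}) + emat P σ) * (taboo P W) ^ k := by
        rw [← taboo_split P W σ hσ, ← pow_succ']
      have h2 : ∑ j ∈ Finset.range (k + 1),
            (taboo P (W ∪ {σ})) ^ j * emat P σ * (taboo P W) ^ (k + 1 - 1 - j)
          = ∑ j ∈ Finset.range k,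
              (taboo P (W ∪ {σ})) ^ (j + 1) * emat P σ * (taboo P W) ^ (k - 1 - j)
            + emat P σ * (taboo P W) ^ k := by
        rw [Finset.sum_range_succ']
        congr 1
        · refine Finset.sum_congr rfl fun j hj => ?_
          congr 2
          omega
        · simp
      have h3 : (taboo P (W ∪ {σ})) ^ (k + 1)
            + (∑ j ∈ Finset.range k,
                (taboo P (W ∪ {σ})) ^ (j + 1) * emat P σ * (taboo P W) ^ (k - 1 - j)
              + emat P σ * (taboo P W) ^ k)
          = taboo P (W ∪ {σ}) * ((taboo P (W ∪ {σ})) ^ k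
              + ∑ j ∈ Finset.range k,
                  (taboo P (W ∪ {σ})) ^ j * emat P σ * (taboo P W) ^ (k - 1 - j))
            + emat P σ * (taboo P W) ^ k := by
        rw [mul_add, Finset.mul_sum, ← pow_succ', add_assoc]
        congr 2
        refine Finset.sum_congr rfl fun j hj => ?_
        simp [pow_succ', mul_assoc]
      rw [h1, add_mul, h2, h3, ← ih]

lemma qe_apply (C : Finset S) (j : ℕ) (x y : S) :
    ((taboo P C) ^ j * emat P σ) x y
      = if y = σ then ((taboo P C) ^ j * P) x σ else 0 := by
  by_cases hy : y = σ <;> simp [Matrix.mul_apply, emat, hy]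

lemma a_rec (hσ : σ ∉ W) (k : ℕ) (η : S) :
    ((taboo P W) ^ k * P) σ η
      = ((taboo P (W ∪ {σ})) ^ k * P) σ η
        + ∑ j ∈ Finset.range k,
            ((taboo P (W ∪ {σ})) ^ j * P) σ σ
              * ((taboo P W) ^ (k - 1 - j) * P) σ η := by
  conv_lhs => rw [pow_taboo_expand P W σ hσ k]
  rw [add_mul, Matrix.add_apply, Finset.sum_mul, Matrix.sum_apply]
  congr 1
  refine Finset.sum_congr rfl fun j hj => ?_
  rw [mul_assoc ((taboo P (W ∪ {σ})) ^ j * emat P σ), Matrix.mul_apply]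
  simp [qe_apply, ite_mul, Finset.sum_ite_eq']

end Renewal

section Pos
variable {S : Type*} [Fintype S] [DecidableEq S]
variable (P : Matrix S S ℝ)

lemma pow_entry_nonneg (hM : ∀ x y, 0 ≤ P x y) (k : ℕ) (x y : S) :
    0 ≤ (P ^ k) x y := by
  induction k generalizing x y with
  | zero => simp only [pow_zero, Matrix.one_apply]; split <;> norm_num
  | succ k ih =>
      rw [pow_succ, Matrix.mul_apply]
      exact Finset.sum_nonneg fun z _ => mul_nonneg (ih x z) (hM z y)

variable (C : Finset S) {A : Finset S}

lemma tsum_ge_single (hAC : A ⊆ C) (hP : ∀ x y, 0 ≤ P x y)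
    (hProw : ∀ x, ∑ y, P x y = 1) (x a : S) (ha : a ∈ A) :
    P x a ≤ ∑' k, ∑ a' ∈ A, ((taboo P C) ^ k * P) x a' := by
  have hs := summable_sumA P C hAC hP hProw x
  have h0 : P x a ≤ ∑ a' ∈ A, ((taboo P C) ^ 0 * P) x a' := by
    simp only [pow_zero, Matrix.one_mul]
    exact Finset.single_le_sum (fun a' _ => hP x a') ha
  exact h0.trans (Summable.le_tsum hs 0 fun j _ =>
    Finset.sum_nonneg fun a' _ => qkp_nonneg P C hP j x a')

set_option maxHeartbeats 1000000 in
lemma tsum_ge_step (hAC : A ⊆ C) (hP : ∀ x y, 0 ≤ P x y)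
    (hProw : ∀ x, ∑ y, P x y = 1) (x y : S) (hy : y ∉ C) :
    P x y * (∑' k, ∑ a ∈ A, ((taboo P C) ^ k * P) y a)
      ≤ ∑' k, ∑ a ∈ A, ((taboo P C) ^ k * P) x a := by
  have hsx := summable_sumA P C hAC hP hProw x
  have hsy := summable_sumA P C hAC hP hProw y
  have h2 : ∀ k, P x y * ∑ a ∈ A, ((taboo P C) ^ k * P) y a
      ≤ ∑ a ∈ A, ((taboo P C) ^ (k + 1) * P) x a := by
    intro k
    rw [Finset.mul_sum]
    refine Finset.sum_le_sum fun a _ => ?_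
    have hrw : ((taboo P C) ^ (k + 1) * P) x a
        = ∑ z, taboo P C x z * ((taboo P C) ^ k * P) z a := by
      rw [pow_succ', mul_assoc, Matrix.mul_apply]
    rw [hrw]
    have hQ : taboo P C x y = P x y := by rw [taboo_apply, if_neg hy]
    calc P x y * ((taboo P C) ^ k * P) y a
        = taboo P C x y * ((taboo P C) ^ k * P) y a := by rw [hQ]
      _ ≤ ∑ z, taboo P C x z * ((taboo P C) ^ k * P) z a :=
          Finset.single_le_sum (fun z _ => mul_nonneg (taboo_nonneg P C hP x z)
            (qkp_nonneg P C hP k z a)) (Finset.mem_univ y)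
  have h3 : Summable (fun k => ∑ a ∈ A, ((taboo P C) ^ (k + 1) * P) x a) :=
    (summable_nat_add_iff 1).2 hsx
  have h4 : Summable (fun k => P x y * ∑ a ∈ A, ((taboo P C) ^ k * P) y a) :=
    hsy.mul_left _
  calc P x y * (∑' k, ∑ a ∈ A, ((taboo P C) ^ k * P) y a)
      = ∑' k, P x y * ∑ a ∈ A, ((taboo P C) ^ k * P) y a := (tsum_mul_left).symm
    _ ≤ ∑' k, ∑ a ∈ A, ((taboo P C) ^ (k + 1) * P) x a := Summable.tsum_le_tsum h2 h4 h3
    _ ≤ (∑ a ∈ A, ((taboo P C) ^ 0 * P) x a)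
          + ∑' k, ∑ a ∈ A, ((taboo P C) ^ (k + 1) * P) x a :=
        le_add_of_nonneg_left (Finset.sum_nonneg fun a' _ => qkp_nonneg P C hP 0 x a')
    _ = ∑' k, ∑ a ∈ A, ((taboo P C) ^ k * P) x a := (Summable.tsum_eq_zero_add hsx).symm

end Pos

section HitPos
variable {S : Type*} [Fintype S] [DecidableEq S]
variable (P : Matrix S S ℝ) (W : Finset S) (σ η : S)

lemma hit_pos_step (hP : ∀ x y, 0 ≤ P x y) (hProw : ∀ x, ∑ y, P x y = 1)
    (hη : η ∈ W) :
    ∀ n x, x ∉ W → x ≠ σ → 0 < (P ^ n) x η →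
      0 < ∑' k, ∑ a ∈ W, ((taboo P (W ∪ {σ})) ^ k * P) x a
        ∨ ∃ m, m < n ∧ 0 < (P ^ m) σ η := by
  intro n
  induction n with
  | zero =>
      intro x hxW _ h0
      exfalso
      have hxη : x ≠ η := fun h => hxW (h ▸ hη)
      simp [Matrix.one_apply, hxη] at h0
  | succ n ih =>
      intro x hxW hxσ hpos
      have hdecomp : (P ^ (n + 1)) x η = ∑ z, P x z * (P ^ n) z η := by
        rw [pow_succ', Matrix.mul_apply]
      rw [hdecomp] at hpos
      obtain ⟨y, -, hy⟩ := Finset.exists_ne_zero_of_sum_ne_zero hpos.ne'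
      have hy1 : 0 < P x y := lt_of_le_of_ne (hP x y) (Ne.symm (left_ne_zero_of_mul hy))
      have hy2 : 0 < (P ^ n) y η :=
        lt_of_le_of_ne (pow_entry_nonneg P hP n y η) (Ne.symm (right_ne_zero_of_mul hy))
      by_cases hyW : y ∈ W
      · left
        exact lt_of_lt_of_le hy1
          (tsum_ge_single P (W ∪ {σ}) Finset.subset_union_left hP hProw x y hyW)
      · by_cases hyσ : y = σ
        · right; exact ⟨n, Nat.lt_succ_self n, hyσ ▸ hy2⟩
        · rcases ih y hyW hyσ hy2 with hg | ⟨m, hm, hmp⟩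
          · left
            have hyC : y ∉ W ∪ {σ} := by simp [hyW, hyσ]
            exact lt_of_lt_of_le (mul_pos hy1 hg)
              (tsum_ge_step P (W ∪ {σ}) Finset.subset_union_left hP hProw x y hyC)
          · right; exact ⟨m, hm.trans (Nat.lt_succ_self n), hmp⟩

lemma hit_pos (hP : ∀ x y, 0 ≤ P x y) (hProw : ∀ x, ∑ y, P x y = 1)
    (hη : η ∈ W) (hσ : σ ∉ W) :
    ∀ n, 0 < (P ^ n) σ η →
      0 < ∑' k, ∑ a ∈ W, ((taboo P (W ∪ {σ})) ^ k * P) σ a := by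
  intro n
  induction n using Nat.strong_induction_on with
  | _ n ih =>
    intro hpos
    match n, ih, hpos with
    | 0, ih, hpos => 
        exfalso
        have hxη : σ ≠ η := fun h => hσ (h ▸ hη)
        simp [Matrix.one_apply, hxη] at hpos
    | (n + 1), ih, hpos =>
        have hdecomp : (P ^ (n + 1)) σ η = ∑ z, P σ z * (P ^ n) z η := by
          rw [pow_succ', Matrix.mul_apply]
        rw [hdecomp] at hpos
        obtain ⟨y, -, hy⟩ := Finset.exists_ne_zero_of_sum_ne_zero hpos.ne'
        have hy1 : 0 < P σ y := lt_of_le_of_ne (hP σ y) (Ne.symm (left_ne_zero_of_mul hy))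
        have hy2 : 0 < (P ^ n) y η :=
          lt_of_le_of_ne (pow_entry_nonneg P hP n y η) (Ne.symm (right_ne_zero_of_mul hy))
        by_cases hyW : y ∈ W
        · exact lt_of_lt_of_le hy1
            (tsum_ge_single P (W ∪ {σ}) Finset.subset_union_left hP hProw σ y hyW)
        · by_cases hyσ : y = σ
          · exact ih n (Nat.lt_succ_self n) (hyσ ▸ hy2)
          · rcases hit_pos_step P W σ η hP hProw hη n y hyW hyσ hy2 with hg | ⟨m, hm, hmp⟩
            · have hyC : y ∉ W ∪ {σ} := by simp [hyW, hyσ]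
              exact lt_of_lt_of_le (mul_pos hy1 hg)
                (tsum_ge_step P (W ∪ {σ}) Finset.subset_union_left hP hProw σ y hyC)
            · exact ih m (hm.trans (Nat.lt_succ_self n)) hmp

end HitPos

set_option maxHeartbeats 1000000 in
/-- Renewal/reversibility bound: for an irreducible discrete-time Markov chain
`P` on a finite state space, reversible with respect to the positive measure `G`, and states
`σ, η` with `η ∈ W`, `σ ∉ W`:
`P_σ(τ_η < τ_{W∖η}) ≤ P_σ(τ_η < τ_{(W∖η)∪σ}) / P_σ(τ_W < τ_σ)`, and
`P_σ(τ_η < τ_{(W∖η)∪σ}) = (G(η)/G(σ)) · P_η(τ_σ < τ_W)`. -/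
theorem renewal_reversibility_bound
    {S : Type*} [Fintype S] [DecidableEq S]
    (P : Matrix S S ℝ) (G : S → ℝ)
    (hPnonneg : ∀ x y, 0 ≤ P x y) (hProw : ∀ x, ∑ y, P x y = 1)
    (hGpos : ∀ x, 0 < G x)
    (hrev : ∀ x y, G x * P x y = G y * P y x)
    (hirred : ∀ x y, ∃ n : ℕ, 0 < (P ^ n) x y)
    (W : Finset S) (σ η : S) (hη : η ∈ W) (hσ : σ ∉ W) :
    hitProb P {η} (W \ {η}) σ
      ≤ hitProb P {η} ((W \ {η}) ∪ {σ}) σ / hitProb P W {σ} σ ∧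
    hitProb P {η} ((W \ {η}) ∪ {σ}) σ = (G η / G σ) * hitProb P {σ} W η := by
  have hset1 : {η} ∪ (W \ {η}) = W :=
    Finset.union_sdiff_of_subset (Finset.singleton_subset_iff.2 hη)
  have hset2 : ({η} : Finset S) ∪ ((W \ {η}) ∪ {σ}) = W ∪ {σ} := by
    ext z
    simp only [Finset.mem_union, Finset.mem_sdiff, Finset.mem_singleton]
    constructor
    · rintro (rfl | ⟨hzW, _⟩ | rfl)
      · exact Or.inl hη
      · exact Or.inl hzW
      · exact Or.inr rfl
    · rintro (hzW | rfl)
      · by_cases hz : z = η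
        · exact Or.inl hz
        · exact Or.inr (Or.inl ⟨hzW, hz⟩)
      · exact Or.inr (Or.inr rfl)
  have hset3 : ({σ} : Finset S) ∪ W = W ∪ {σ} := Finset.union_comm _ _
  have e1 : hitProb P {η} (W \ {η}) σ = ∑' k, ((taboo P W) ^ k * P) σ η := by
    unfold hitProb
    rw [hset1]
    simp only [Finset.sum_singleton]
  have e2 : hitProb P {η} ((W \ {η}) ∪ {σ}) σ
      = ∑' k, ((taboo P (W ∪ {σ})) ^ k * P) σ η := by
    unfold hitProb
    rw [hset2]
    simp only [Finset.sum_singleton]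
  have e3 : hitProb P W {σ} σ
      = ∑' k, ∑ a ∈ W, ((taboo P (W ∪ {σ})) ^ k * P) σ a := rfl
  have e4 : hitProb P {σ} W η = ∑' k, ((taboo P (W ∪ {σ})) ^ k * P) η σ := by
    unfold hitProb
    rw [hset3]
    simp only [Finset.sum_singleton]
  -- Part 2
  have part2 : hitProb P {η} ((W \ {η}) ∪ {σ}) σ = (G η / G σ) * hitProb P {σ} W η := by
    rw [e2, e4]
    have hterm : ∀ k, ((taboo P (W ∪ {σ})) ^ k * P) σ η
        = (G η / G σ) * ((taboo P (W ∪ {σ})) ^ k * P) η σ := by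
      intro k
      have h := rev_qkp P (W ∪ {σ}) G hrev k σ η
      rw [div_mul_eq_mul_div, eq_div_iff (ne_of_gt (hGpos σ))]
      linear_combination h
    rw [tsum_congr hterm, tsum_mul_left]
  refine ⟨?_, part2⟩
  -- Part 1
  set a : ℕ → ℝ := fun k => ((taboo P W) ^ k * P) σ η with ha_def
  set b : ℕ → ℝ := fun k => ((taboo P (W ∪ {σ})) ^ k * P) σ η with hb_def
  set c : ℕ → ℝ := fun k => ((taboo P (W ∪ {σ})) ^ k * P) σ σ with hc_def
  set s : ℕ → ℝ := fun k => ∑ a ∈ W, ((taboo P (W ∪ {σ})) ^ k * P) σ a with hs_def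
  have ha0 : ∀ k, 0 ≤ a k := fun k => qkp_nonneg P W hPnonneg k σ η
  have hb0 : ∀ k, 0 ≤ b k := fun k => qkp_nonneg P (W ∪ {σ}) hPnonneg k σ η
  have hc0 : ∀ k, 0 ≤ c k := fun k => qkp_nonneg P (W ∪ {σ}) hPnonneg k σ σ
  have hηW : ({η} : Finset S) ⊆ W := Finset.singleton_subset_iff.2 hη
  have hηC : ({η} : Finset S) ⊆ W ∪ {σ} := hηW.trans Finset.subset_union_left
  have hσC : ({σ} : Finset S) ⊆ W ∪ {σ} := Finset.subset_union_right
  have Sa : Summable a :=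
    (summable_sumA P W hηW hPnonneg hProw σ).congr fun k => by
      simp [Finset.sum_singleton, ha_def]
  have Sb : Summable b :=
    (summable_sumA P (W ∪ {σ}) hηC hPnonneg hProw σ).congr fun k => by
      simp [Finset.sum_singleton, hb_def]
  have Sc : Summable c :=
    (summable_sumA P (W ∪ {σ}) hσC hPnonneg hProw σ).congr fun k => by
      simp [Finset.sum_singleton, hc_def]
  have Ss : Summable s :=
    summable_sumA P (W ∪ {σ}) Finset.subset_union_left hPnonneg hProw σ
  have hrec : ∀ k, a k = b k + ∑ j ∈ Finset.range k, c j * a (k - 1 - j) :=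
    fun k => a_rec P W σ hσ k η
  have hconv0 : ∀ k, 0 ≤ ∑ j ∈ Finset.range k, c j * a (k - 1 - j) := fun k =>
    Finset.sum_nonneg fun j _ => mul_nonneg (hc0 j) (ha0 _)
  have Sconv : Summable (fun k => ∑ j ∈ Finset.range k, c j * a (k - 1 - j)) := by
    refine Summable.of_nonneg_of_le hconv0 (fun k => ?_) Sa
    have := hrec k
    have := hb0 k
    linarith
  have hAB : ∑' k, a k = ∑' k, b k + ∑' k, ∑ j ∈ Finset.range k, c j * a (k - 1 - j) := by
    rw [tsum_congr hrec, Summable.tsum_add Sb Sconv]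
  have hcnorm : Summable fun k => ‖c k‖ :=
    Sc.congr fun k => (Real.norm_of_nonneg (hc0 k)).symm
  have hanorm : Summable fun k => ‖a k‖ :=
    Sa.congr fun k => (Real.norm_of_nonneg (ha0 k)).symm
  have hconv : ∑' k, ∑ j ∈ Finset.range k, c j * a (k - 1 - j)
      = (∑' k, c k) * (∑' k, a k) := by
    rw [Summable.tsum_eq_zero_add Sconv]
    simp only [Finset.range_zero, Finset.sum_empty, zero_add]
    rw [tsum_mul_tsum_eq_tsum_sum_range_of_summable_norm hcnorm hanorm]
    exact tsum_congr fun k => Finset.sum_congr rfl fun j hj => by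
      congr 1
  have hcs : ∑' k, c k + ∑' k, s k ≤ 1 := by
    have hsum : ∀ k, c k + s k = ∑ x ∈ W ∪ {σ}, ((taboo P (W ∪ {σ})) ^ k * P) σ x := by
      intro k
      rw [Finset.sum_union (Finset.disjoint_singleton_right.2 hσ), Finset.sum_singleton,
        add_comm]
    rw [← Summable.tsum_add Sc Ss, tsum_congr hsum]
    exact tsum_sumC_le_one P (W ∪ {σ}) hPnonneg hProw σ
  have h3pos : 0 < ∑' k, s k := by
    obtain ⟨n, hn⟩ := hirred σ η
    exact hit_pos P W σ η hPnonneg hProw hη hσ n hn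
  have hA0 : 0 ≤ ∑' k, a k := tsum_nonneg ha0
  rw [e1, e2, e3]
  rw [le_div_iff₀ h3pos]
  have hstep : (∑' k, a k) * (∑' k, s k) ≤ (∑' k, a k) * (1 - ∑' k, c k) :=
    mul_le_mul_of_nonneg_left (by linarith) hA0
  have hfin : (∑' k, a k) * (1 - ∑' k, c k) = ∑' k, b k := by
    rw [hconv] at hAB
    linear_combination hAB
  linarith
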